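/- arXiv:1409.1159 — 3 statements merged into one kernel-verified Lean document; each statement's English description precedes it below -/
import Mathlib

section
/- Let $V:\mathbb{R}^d\to\mathbb{R}$ be $C^1$ bounded below and $F:\mathbb{R}^d\to\mathbb{R}$ be $C^1$, even, bounded below with $F(0)=0$. For absolutely continuous paths $g_1,\dots,g_N$ on $[0,T]$ with $g_i(0)=x$, define $$I^N(g_1,\dots,g_N)=\frac14\sum_{i=1}^N\int_0^T\Big\|\dot g_i(t)+\nabla V(g_i(t))+\frac1N\sum_{k=1}^N\nabla F(g_i(t)-g_k(t))\Big\|^2 dt.$$ Then $$I^N(g_1,\dots,g_N)\ \ge\ \frac14\sum_{i=1}^N\int_0^T\|\dot g_i(t)\|^2 dt + \frac{N}{2}\Big(\inf_z V(z)-V(x)\Big) + \frac{N}{4}\inf_z F(z).$$ -/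
open MeasureTheory Finset RealInnerProductSpace

section helpers
open InnerProductSpace
variable {E : Type*} [NormedAddCommGroup E] [InnerProductSpace ℝ E] [CompleteSpace E]

lemma grad_comp_deriv' {f : E → ℝ} (hf : ContDiff ℝ 1 f) {c : ℝ → E} {c' : E} {t : ℝ}
    (hc : HasDerivAt c c' t) :
    HasDerivAt (fun s => f (c s)) ⟪gradient f (c t), c'⟫ t := by
  have h1 := ((hf.differentiable one_ne_zero) (c t)).hasGradientAt
  have := h1.hasFDerivAt.comp_hasDerivAt t hc
  simpa [InnerProductSpace.toDual_apply_apply, Function.comp_def] using this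

lemma grad_odd' {f : E → ℝ} (hf : ContDiff ℝ 1 f) (hfe : ∀ z, f (-z) = f z) (z : E) :
    gradient f (-z) = - gradient f z := by
  have hd : ∀ y, DifferentiableAt ℝ f y := fun y => (hf.differentiable one_ne_zero) y
  have h1 : HasFDerivAt (fun y : E => f (-y))
      ((fderiv ℝ f (-z)).comp (-(ContinuousLinearMap.id ℝ E))) z := by
    have := (hd (-z)).hasFDerivAt.comp z ((hasFDerivAt_id z).neg)
    simpa [Function.comp_def] using this
  have h2 : (fun y : E => f (-y)) = f := funext hfe
  rw [h2] at h1
  have h3 : fderiv ℝ f z = (fderiv ℝ f (-z)).comp (-(ContinuousLinearMap.id ℝ E)) := h1.fderiv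
  have h4 : (fderiv ℝ f (-z)).comp (-(ContinuousLinearMap.id ℝ E)) = -(fderiv ℝ f (-z)) := by
    ext v; simp
  unfold gradient
  rw [h3, h4, map_neg, neg_neg]

lemma grad_continuous' {f : E → ℝ} (hf : ContDiff ℝ 1 f) : Continuous (gradient f) := by
  have : Continuous (fderiv ℝ f) := hf.continuous_fderiv one_ne_zero
  exact (toDual ℝ E).symm.continuous.comp this

end helpers

theorem rate_function_lower_bound
    (d N : ℕ) (hN : 0 < N) (T : ℝ) (hT : 0 < T)
    (x : EuclideanSpace ℝ (Fin d))
    (g g' : Fin N → ℝ → EuclideanSpace ℝ (Fin d))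
    (hstart : ∀ i, g i 0 = x)
    (hderiv : ∀ i, ∀ t ∈ Set.Icc (0 : ℝ) T, HasDerivAt (g i) (g' i t) t)
    (hL2 : ∀ i, MemLp (g' i) 2 (volume.restrict (Set.Icc (0 : ℝ) T)))
    (V : EuclideanSpace ℝ (Fin d) → ℝ)
    (hV : ContDiff ℝ 1 V) (hVbdd : BddBelow (Set.range V))
    (F : EuclideanSpace ℝ (Fin d) → ℝ)
    (hF : ContDiff ℝ 1 F) (hFeven : ∀ z, F (-z) = F z) (hF0 : F 0 = 0)
    (hFbdd : BddBelow (Set.range F)) :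
    (1 / 4) * ∑ i, ∫ t in (0 : ℝ)..T,
        ‖g' i t + gradient V (g i t)
          + (1 / (N : ℝ)) • ∑ k, gradient F (g i t - g k t)‖ ^ 2
      ≥ (1 / 4) * ∑ i, (∫ t in (0 : ℝ)..T, ‖g' i t‖ ^ 2)
        + ((N : ℝ) / 2) * ((⨅ z, V z) - V x)
        + ((N : ℝ) / 4) * ⨅ z, F z := by
  have hNR : (0:ℝ) < N := Nat.cast_pos.mpr hN
  set μ := volume.restrict (Set.Icc (0:ℝ) T) with hμ
  set Icc := Set.Icc (0:ℝ) T with hIcc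
  -- the drift
  set b : Fin N → ℝ → EuclideanSpace ℝ (Fin d) := fun i t =>
    gradient V (g i t) + (1 / (N : ℝ)) • ∑ k, gradient F (g i t - g k t) with hbdef
  -- continuity of g on Icc
  have hgc : ∀ i, ContinuousOn (g i) Icc := fun i t ht =>
    ((hderiv i t ht).continuousAt).continuousWithinAt
  have hbc : ∀ i, ContinuousOn (b i) Icc := by
    intro i
    apply ContinuousOn.add
    · exact (grad_continuous' hV).comp_continuousOn (hgc i)
    · refine ContinuousOn.const_smul (g := fun t => ∑ k, gradient F (g i t - g k t)) ?_ (1 / (N : ℝ))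
      apply continuousOn_finset_sum
      intro k _
      exact (grad_continuous' hF).comp_continuousOn ((hgc i).sub (hgc k))
  -- measurability
  have hg'm : ∀ i, AEStronglyMeasurable (g' i) μ := fun i => (hL2 i).aestronglyMeasurable
  have hbm : ∀ i, AEStronglyMeasurable (b i) μ := fun i =>
    ContinuousOn.aestronglyMeasurable (hbc i) measurableSet_Icc
  -- integrability of g' and ‖g'‖²
  have hg'1 : ∀ i, Integrable (g' i) μ := fun i =>
    memLp_one_iff_integrable.mp ((hL2 i).mono_exponent (by norm_num : (1:ENNReal) ≤ 2))
  have hsq : ∀ i, Integrable (fun t => ‖g' i t‖ ^ 2) μ := fun i => (hL2 i).norm.integrable_sq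
  -- bound on b
  have hbbd : ∀ i, ∃ M : ℝ, 0 ≤ M ∧ ∀ t ∈ Icc, ‖b i t‖ ≤ M := by
    intro i
    obtain ⟨M, hM⟩ := isCompact_Icc.exists_bound_of_continuousOn (hbc i)
    exact ⟨max M 0, le_max_right _ _, fun t ht => (hM t ht).trans (le_max_left _ _)⟩
  -- D(t) = ∑ᵢ ⟪g'ᵢ, bᵢ⟫
  set D : ℝ → ℝ := fun t => ∑ i, ⟪g' i t, b i t⟫ with hDdef
  -- integrability of each inner product and of D
  have hinner_int : ∀ i, Integrable (fun t => ⟪g' i t, b i t⟫) μ := by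
    intro i
    obtain ⟨M, hM0, hM⟩ := hbbd i
    refine Integrable.mono' ((hg'1 i).norm.const_mul M) ((hg'm i).inner (hbm i)) ?_
    filter_upwards [ae_restrict_mem measurableSet_Icc] with t ht
    calc ‖⟪g' i t, b i t⟫‖ ≤ ‖g' i t‖ * ‖b i t‖ := norm_inner_le_norm _ _
      _ ≤ M * ‖g' i t‖ := by
          rw [mul_comm]
          exact mul_le_mul_of_nonneg_right (hM t ht) (norm_nonneg _)
  have hD_int : Integrable D μ := integrable_finset_sum _ (fun i _ => hinner_int i)
  -- integrability of ‖g' + b‖²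
  have hf_int : ∀ i, Integrable (fun t => ‖g' i t + b i t‖ ^ 2) μ := by
    intro i
    obtain ⟨M, hM0, hM⟩ := hbbd i
    have hmaj : Integrable (fun t => ‖g' i t‖ ^ 2 + (2 * M) * ‖g' i t‖ + M ^ 2) μ :=
      ((hsq i).add ((hg'1 i).norm.const_mul (2 * M))).add (integrable_const _)
    refine Integrable.mono' hmaj (((hg'm i).add (hbm i)).norm.pow 2) ?_
    filter_upwards [ae_restrict_mem measurableSet_Icc] with t ht
    have h1 : ‖g' i t + b i t‖ ≤ ‖g' i t‖ + M :=
      (norm_add_le _ _).trans (by linarith [hM t ht])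
    have h2 : ‖(‖g' i t + b i t‖ ^ 2)‖ = ‖g' i t + b i t‖ ^ 2 := by
      rw [Real.norm_eq_abs]; exact abs_of_nonneg (sq_nonneg _)
    rw [h2]
    nlinarith [norm_nonneg (g' i t + b i t), norm_nonneg (g' i t)]
  -- convert to interval-integrability
  have toII : ∀ (f : ℝ → ℝ), Integrable f μ → IntervalIntegrable f volume 0 T := by
    intro f hf
    rw [intervalIntegrable_iff, Set.uIoc_of_le hT.le]
    exact MeasureTheory.IntegrableOn.mono_set hf Set.Ioc_subset_Icc_self
  -- the potential
  set Φ : ℝ → ℝ := fun t => (∑ i, V (g i t))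
      + (1 / (2 * (N:ℝ))) * ∑ i, ∑ k, F (g i t - g k t) with hΦdef
  have hΦderiv : ∀ t ∈ Icc, HasDerivAt Φ (D t) t := by
    intro t ht
    have hD1 : HasDerivAt (fun s => ∑ i, V (g i s))
        (∑ i, ⟪gradient V (g i t), g' i t⟫) t :=
      HasDerivAt.fun_sum fun i _ => grad_comp_deriv' hV (hderiv i t ht)
    have hD2 : HasDerivAt (fun s => ∑ i, ∑ k, F (g i s - g k s))
        (∑ i, ∑ k, ⟪gradient F (g i t - g k t), g' i t - g' k t⟫) t :=
      HasDerivAt.fun_sum fun i _ => HasDerivAt.fun_sum fun k _ =>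
        grad_comp_deriv' hF ((hderiv i t ht).sub (hderiv k t ht))
    have h := hD1.add (hD2.const_mul (1 / (2 * (N:ℝ))))
    convert (show HasDerivAt Φ _ t from h) using 1
    -- D t equals the computed derivative
    have hodd : ∀ i k : Fin N, gradient F (g i t - g k t) = - gradient F (g k t - g i t) := by
      intro i k
      rw [show g i t - g k t = -(g k t - g i t) from (neg_sub _ _).symm, grad_odd' hF hFeven]
    have hswap : ∑ i, ∑ k, ⟪gradient F (g i t - g k t), g' k t⟫
        = - ∑ i, ∑ k, ⟪gradient F (g i t - g k t), g' i t⟫ := by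
      rw [Finset.sum_comm]
      calc ∑ k, ∑ i, ⟪gradient F (g i t - g k t), g' k t⟫
          = ∑ k, ∑ i, -⟪gradient F (g k t - g i t), g' k t⟫ := by
            refine Finset.sum_congr rfl fun k _ => Finset.sum_congr rfl fun i _ => ?_
            rw [hodd i k, inner_neg_left]
        _ = - ∑ k, ∑ i, ⟪gradient F (g k t - g i t), g' k t⟫ := by
            simp
    have hkey : ∑ i, ∑ k, ⟪gradient F (g i t - g k t), g' i t - g' k t⟫
        = 2 * ∑ i, ∑ k, ⟪gradient F (g i t - g k t), g' i t⟫ := by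
      have hsub : ∀ i k : Fin N, ⟪gradient F (g i t - g k t), g' i t - g' k t⟫
          = ⟪gradient F (g i t - g k t), g' i t⟫ - ⟪gradient F (g i t - g k t), g' k t⟫ :=
        fun i k => inner_sub_right _ _ _
      simp only [hsub, Finset.sum_sub_distrib]
      rw [hswap]; ring
    have hVcomm : ∑ i, ⟪gradient V (g i t), g' i t⟫ = ∑ i, ⟪g' i t, gradient V (g i t)⟫ :=
      Finset.sum_congr rfl fun i _ => real_inner_comm _ _
    have hFcomm : ∑ i, ∑ k, ⟪gradient F (g i t - g k t), g' i t⟫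
        = ∑ i, ∑ k, ⟪g' i t, gradient F (g i t - g k t)⟫ :=
      Finset.sum_congr rfl fun i _ => Finset.sum_congr rfl fun k _ => real_inner_comm _ _
    show (∑ i, ⟪g' i t, b i t⟫) = _
    simp only [hbdef, inner_add_right, real_inner_smul_right, inner_sum,
      Finset.sum_add_distrib]
    rw [hkey, hVcomm, hFcomm, ← Finset.mul_sum]
    have hN' : (N:ℝ) ≠ 0 := ne_of_gt hNR
    field_simp
  -- FTC
  have hFTC : (∫ t in (0:ℝ)..T, D t) = Φ T - Φ 0 := by
    apply intervalIntegral.integral_eq_sub_of_hasDerivAt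
    · intro t ht
      rw [Set.uIcc_of_le hT.le] at ht
      exact hΦderiv t ht
    · exact toII D hD_int
  -- endpoint values
  have hΦ0 : Φ 0 = (N:ℝ) * V x := by
    simp [hΦdef, hstart, hF0]
  have hinfV : ∀ y : EuclideanSpace ℝ (Fin d), (⨅ z, V z) ≤ V y := fun y => ciInf_le hVbdd y
  have hinfF : ∀ y : EuclideanSpace ℝ (Fin d), (⨅ z, F z) ≤ F y := fun y => ciInf_le hFbdd y
  have hΦT : (N:ℝ) * (⨅ z, V z) + ((N:ℝ)/2) * (⨅ z, F z) ≤ Φ T := by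
    have h1 : (N:ℝ) * (⨅ z, V z) ≤ ∑ i, V (g i T) := by
      calc (N:ℝ) * (⨅ z, V z) = ∑ _i : Fin N, (⨅ z, V z) := by
            simp [Finset.sum_const, mul_comm]
        _ ≤ ∑ i, V (g i T) := Finset.sum_le_sum fun i _ => hinfV _
    have h2 : ((N:ℝ) * (N:ℝ)) * (⨅ z, F z) ≤ ∑ i : Fin N, ∑ k : Fin N, F (g i T - g k T) := by
      calc ((N:ℝ) * (N:ℝ)) * (⨅ z, F z) = ∑ _i : Fin N, ∑ _k : Fin N, (⨅ z, F z) := by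
            simp [Finset.sum_const, mul_comm, mul_assoc]
        _ ≤ _ := Finset.sum_le_sum fun i _ => Finset.sum_le_sum fun k _ => hinfF _
    have h3 : (0:ℝ) ≤ 1 / (2 * (N:ℝ)) := by positivity
    have h4 : (1 / (2 * (N:ℝ))) * (((N:ℝ) * (N:ℝ)) * (⨅ z, F z))
        ≤ (1 / (2 * (N:ℝ))) * ∑ i : Fin N, ∑ k : Fin N, F (g i T - g k T) :=
      mul_le_mul_of_nonneg_left h2 h3
    have h5 : (1 / (2 * (N:ℝ))) * (((N:ℝ) * (N:ℝ)) * (⨅ z, F z)) = ((N:ℝ)/2) * (⨅ z, F z) := by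
      have hN' : (N:ℝ) ≠ 0 := ne_of_gt hNR
      field_simp
    rw [hΦdef]
    dsimp only
    rw [h5] at h4
    linarith
  -- interval integrability
  have hii_f : ∀ i, IntervalIntegrable (fun t => ‖g' i t + b i t‖^2) volume 0 T :=
    fun i => toII _ (hf_int i)
  have hii_sq : ∀ i, IntervalIntegrable (fun t => ‖g' i t‖^2) volume 0 T :=
    fun i => toII _ (hsq i)
  have hsum_sq : Integrable (fun t => ∑ i, ‖g' i t‖^2) μ :=
    integrable_finset_sum _ fun i _ => hsq i
  -- step 1: exchange sum and integral
  have hstep1 : ∑ i, (∫ t in (0:ℝ)..T, ‖g' i t + b i t‖^2)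
      = ∫ t in (0:ℝ)..T, ∑ i, ‖g' i t + b i t‖^2 :=
    (intervalIntegral.integral_finset_sum (fun i _ => hii_f i)).symm
  -- step 2: pointwise lower bound and monotonicity
  have hmono : (∫ t in (0:ℝ)..T, ((∑ i, ‖g' i t‖^2) + 2 * D t))
      ≤ ∫ t in (0:ℝ)..T, ∑ i, ‖g' i t + b i t‖^2 := by
    apply intervalIntegral.integral_mono_on hT.le
    · exact (toII _ hsum_sq).add ((toII D hD_int).const_mul 2)
    · exact toII _ (integrable_finset_sum _ fun i _ => hf_int i)
    · intro t ht
      have hpt : ∀ i : Fin N, ‖g' i t‖^2 + 2*⟪g' i t, b i t⟫ ≤ ‖g' i t + b i t‖^2 := by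
        intro i
        have hns := norm_add_sq_real (g' i t) (b i t)
        nlinarith [sq_nonneg ‖b i t‖]
      calc (∑ i, ‖g' i t‖^2) + 2 * D t
          = ∑ i, (‖g' i t‖^2 + 2*⟪g' i t, b i t⟫) := by
            rw [hDdef]; dsimp only; rw [Finset.mul_sum, Finset.sum_add_distrib]
        _ ≤ ∑ i, ‖g' i t + b i t‖^2 := Finset.sum_le_sum fun i _ => hpt i
  -- step 3: split the integral
  have hsplit : (∫ t in (0:ℝ)..T, ((∑ i, ‖g' i t‖^2) + 2 * D t))
      = (∑ i, ∫ t in (0:ℝ)..T, ‖g' i t‖^2) + 2 * (Φ T - Φ 0) := by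
    rw [intervalIntegral.integral_add (toII _ hsum_sq) ((toII D hD_int).const_mul 2),
      intervalIntegral.integral_const_mul, hFTC,
      intervalIntegral.integral_finset_sum (fun i _ => hii_sq i)]
  -- rewrite the goal's integrand
  have hgoal_lhs : (∑ i, ∫ t in (0:ℝ)..T,
        ‖g' i t + gradient V (g i t)
          + (1 / (N : ℝ)) • ∑ k, gradient F (g i t - g k t)‖ ^ 2)
      = ∑ i, ∫ t in (0:ℝ)..T, ‖g' i t + b i t‖^2 := by
    refine Finset.sum_congr rfl fun i _ => ?_
    apply intervalIntegral.integral_congr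
    intro t _
    simp only [hbdef]
    rw [add_assoc]
  rw [hgoal_lhs]
  have hX : (∑ i, ∫ t in (0:ℝ)..T, ‖g' i t‖^2) + 2 * (Φ T - Φ 0)
      ≤ ∑ i, ∫ t in (0:ℝ)..T, ‖g' i t + b i t‖^2 := by
    rw [hstep1, ← hsplit]; exact hmono
  have hΦdiff : (N:ℝ) * (⨅ z, V z) + ((N:ℝ)/2) * (⨅ z, F z) - (N:ℝ) * V x ≤ Φ T - Φ 0 := by
    rw [hΦ0]; linarith
  have e1 : ((N:ℝ)/2) * ((⨅ z, V z) - V x) = ((N:ℝ) * (⨅ z, V z) - (N:ℝ) * V x)/2 := by ring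
  have e2 : ((N:ℝ)/4) * (⨅ z, F z) = ((N:ℝ)/2 * (⨅ z, F z))/2 := by ring
  have h6 : (1:ℝ)/2 * (Φ T - Φ 0) ≥
      (1:ℝ)/2 * (((N:ℝ) * ⨅ z, V z) + (N:ℝ)/2 * (⨅ z, F z) - (N:ℝ) * V x) := by
    linarith [hΦdiff]
  have h7 : (1:ℝ)/2 * (((N:ℝ) * ⨅ z, V z) + (N:ℝ)/2 * (⨅ z, F z) - (N:ℝ) * V x)
      = ((N:ℝ)/2) * ((⨅ z, V z) - V x) + ((N:ℝ)/4) * (⨅ z, F z) := by ring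
  clear_value b D Φ
  linarith [hX, h6, h7]
end

section
/- Let $V,F:\mathbb{R}^d\to\mathbb{R}$ with $V$ $C^2$, $F$ $C^2$ even, $F(0)=0$, both with globally Lipschitz gradients. Fix $x\in\mathbb{R}^d$, $T>0$ and an absolutely continuous path $f$ with $f(0)=x$ and $\int_0^T\|\dot f\|^2<\infty$. Let $\Psi_\infty^x$ solve $\dot\Psi=-\nabla V(\Psi)$, $\Psi(0)=x$. Define $$J_N(f)=\inf_{f_2,\dots,f_N\in\mathcal{H}_x}\frac14\sum_{i=1}^N\int_0^T\Big\|\dot f_i+\nabla V(f_i)+\frac1N\sum_{k=1}^N\nabla F(f_i-f_k)\Big\|^2 dt \quad (f_1:=f).$$ Then $$\limsup_{N\to\infty}J_N(f)\ \le\ J_\infty(f):=\frac14\int_0^T\big\|\dot f(t)+\nabla V(f(t))+\nabla F(f(t)-\Psi_\infty^x(t))\big\|^2 dt.$$ -/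
open MeasureTheory Finset Filter Topology

section helpers
variable {E : Type*} [NormedAddCommGroup E] [InnerProductSpace ℝ E] [CompleteSpace E]

lemma gradient_even_zero
    (F : E → ℝ) (hF : ContDiff ℝ 2 F) (hFeven : ∀ z, F (-z) = F z) : gradient F 0 = 0 := by
  have hd : DifferentiableAt ℝ F 0 := (hF.differentiable (by norm_num)).differentiableAt
  have h1 : (fun z => F (-z)) = F := funext hFeven
  have hneg : HasFDerivAt (fun z : E => -z) (-(ContinuousLinearMap.id ℝ E)) 0 :=
    (hasFDerivAt_id (0:E)).neg
  have h2 : fderiv ℝ (fun z => F (-z)) 0 = -(fderiv ℝ F 0) := by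
    have hc : fderiv ℝ (fun z => F (-z)) 0
        = (fderiv ℝ F (-(0:E))).comp (fderiv ℝ (fun z : E => -z) 0) :=
      fderiv_comp 0 (by simpa using hd) hneg.differentiableAt
    rw [hc, hneg.fderiv]
    ext v
    simp
  rw [h1] at h2
  have h3 : fderiv ℝ F 0 = 0 := by
    have h4 : (2 : ℝ) • fderiv ℝ F 0 = 0 := by
      rw [two_smul]
      rw [eq_neg_iff_add_eq_zero] at h2
      exact h2
    simpa using h4
  simp [gradient, h3]

lemma memLp_of_continuousOn {T : ℝ} {h : ℝ → E}
    (hc : ContinuousOn h (Set.Icc 0 T)) : MemLp h 2 (volume.restrict (Set.Icc (0:ℝ) T)) := by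
  haveI : IsFiniteMeasure (volume.restrict (Set.Icc (0:ℝ) T)) :=
    ⟨by rw [Measure.restrict_apply_univ]; exact measure_Icc_lt_top⟩
  obtain ⟨C, hC⟩ := (isCompact_Icc (a := (0:ℝ)) (b := T)).exists_bound_of_continuousOn hc
  exact MemLp.of_bound (hc.aestronglyMeasurable measurableSet_Icc) C
    ((ae_restrict_iff' measurableSet_Icc).2 (ae_of_all _ hC))

end helpers

/-- The projected mean-field rate function `J_N(f)`: infimum of the mean-field
rate function `I^N` over the companion paths `f_2, …, f_N` in `H_x`. Paths are
encoded together with their (square-integrable) derivatives via the integral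
representation `g t = x + ∫_0^t g'`. -/
noncomputable def JNproj (d : ℕ) (T : ℝ) (x : EuclideanSpace ℝ (Fin d))
    (V F : EuclideanSpace ℝ (Fin d) → ℝ)
    (f f' : ℝ → EuclideanSpace ℝ (Fin d)) (N : ℕ) : ℝ :=
  sInf { r : ℝ | ∃ g g' : Fin N → ℝ → EuclideanSpace ℝ (Fin d),
    (∀ i : Fin N, (i : ℕ) = 0 → (∀ t ∈ Set.Icc (0 : ℝ) T, g i t = f t ∧ g' i t = f' t)) ∧
    (∀ i, ∀ t ∈ Set.Icc (0 : ℝ) T, g i t = x + ∫ s in (0 : ℝ)..t, g' i s) ∧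
    (∀ i, MemLp (g' i) 2 (volume.restrict (Set.Icc (0 : ℝ) T))) ∧
    r = (1 / 4) * ∑ i, ∫ t in (0 : ℝ)..T,
        ‖g' i t + gradient V (g i t)
          + (1 / (N : ℝ)) • ∑ k, gradient F (g i t - g k t)‖ ^ 2 }

set_option maxHeartbeats 800000 in
theorem limsup_JN_le_Jinf
    (d : ℕ) (T : ℝ) (hT : 0 < T) (x : EuclideanSpace ℝ (Fin d))
    (V : EuclideanSpace ℝ (Fin d) → ℝ) (hV : ContDiff ℝ 2 V)
    (KV : NNReal) (hVlip : LipschitzWith KV (gradient V))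
    (F : EuclideanSpace ℝ (Fin d) → ℝ) (hF : ContDiff ℝ 2 F)
    (hFeven : ∀ z, F (-z) = F z) (hF0 : F 0 = 0)
    (KF : NNReal) (hFlip : LipschitzWith KF (gradient F))
    (f f' : ℝ → EuclideanSpace ℝ (Fin d))
    (hf : ∀ t ∈ Set.Icc (0 : ℝ) T, f t = x + ∫ s in (0 : ℝ)..t, f' s)
    (hfL2 : MemLp f' 2 (volume.restrict (Set.Icc (0 : ℝ) T)))
    (Ψinf : ℝ → EuclideanSpace ℝ (Fin d)) (hΨinf0 : Ψinf 0 = x)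
    (hΨinf : ∀ t ∈ Set.Icc (0 : ℝ) T, HasDerivAt Ψinf (-(gradient V (Ψinf t))) t) :
    limsup (fun N : ℕ => JNproj d T x V F f f' N) atTop
      ≤ (1 / 4) * ∫ t in (0 : ℝ)..T,
          ‖f' t + gradient V (f t) + gradient F (f t - Ψinf t)‖ ^ 2 := by
  classical
  haveI : IsFiniteMeasure (volume.restrict (Set.Icc (0:ℝ) T)) :=
    ⟨by rw [Measure.restrict_apply_univ]; exact measure_Icc_lt_top⟩
  set Ψ' : ℝ → EuclideanSpace ℝ (Fin d) := fun t => -(gradient V (Ψinf t)) with hΨ'def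
  set w : ℝ → EuclideanSpace ℝ (Fin d) := fun t => gradient F (f t - Ψinf t) with hwdef
  set A : ℕ → ℝ := fun N => ∫ t in (0:ℝ)..T,
      ‖f' t + gradient V (f t) + ((((N-1 : ℕ)) : ℝ)/(N:ℝ)) • w t‖ ^ 2 with hAdef
  set B : ℝ := ∫ t in (0:ℝ)..T, ‖gradient F (Ψinf t - f t)‖ ^ 2 with hBdef
  set rr : ℕ → ℝ := fun N => (1/4) * (A N + (((N-1 : ℕ)) : ℝ) * ((1/(N:ℝ))^2 * B)) with hrrdef
  have hgradF0 : gradient F 0 = 0 := gradient_even_zero F hF hFeven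
  -- continuity facts
  have hΨcont : ContinuousOn Ψinf (Set.Icc 0 T) :=
    fun t ht => (hΨinf t ht).continuousAt.continuousWithinAt
  have hfint : IntegrableOn f' (Set.Icc 0 T) volume := hfL2.integrable one_le_two
  have hfcont : ContinuousOn f (Set.Icc 0 T) := by
    have h1 : ContinuousOn (fun t => x + ∫ s in (0:ℝ)..t, f' s) (Set.Icc 0 T) := by
      apply continuousOn_const.add
      have := intervalIntegral.continuousOn_primitive_interval
        (a := (0:ℝ)) (b := T) (μ := volume) (f := f') ?_
      · rwa [Set.uIcc_of_le hT.le] at this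
      · rwa [Set.uIcc_of_le hT.le]
    exact h1.congr hf
  have hΨ'cont : ContinuousOn Ψ' (Set.Icc 0 T) :=
    (hVlip.continuous.comp_continuousOn hΨcont).neg
  have hwcont : ContinuousOn w (Set.Icc 0 T) :=
    hFlip.continuous.comp_continuousOn (hfcont.sub hΨcont)
  have hVfcont : ContinuousOn (fun t => gradient V (f t)) (Set.Icc 0 T) :=
    hVlip.continuous.comp_continuousOn hfcont
  -- representation of Ψinf
  have hΨrep : ∀ t ∈ Set.Icc (0:ℝ) T, Ψinf t = x + ∫ s in (0:ℝ)..t, Ψ' s := by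
    intro t ht
    have hsub : Set.uIcc (0:ℝ) t ⊆ Set.Icc 0 T := by
      rw [Set.uIcc_of_le ht.1]
      exact Set.Icc_subset_Icc le_rfl ht.2
    have hderiv : ∀ s ∈ Set.uIcc (0:ℝ) t, HasDerivAt Ψinf (Ψ' s) s :=
      fun s hs => hΨinf s (hsub hs)
    have hii : IntervalIntegrable Ψ' volume 0 t :=
      (hΨ'cont.mono hsub).intervalIntegrable
    have := intervalIntegral.integral_eq_sub_of_hasDerivAt hderiv hii
    rw [this, hΨinf0]
    abel
  have hΨ'L2 : MemLp Ψ' 2 (volume.restrict (Set.Icc (0:ℝ) T)) := memLp_of_continuousOn hΨ'cont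
  -- nonnegativity of everything in the defining set
  have hnonneg : ∀ N : ℕ, ∀ z ∈ { r : ℝ | ∃ g g' : Fin N → ℝ → EuclideanSpace ℝ (Fin d),
      (∀ i : Fin N, (i : ℕ) = 0 → (∀ t ∈ Set.Icc (0 : ℝ) T, g i t = f t ∧ g' i t = f' t)) ∧
      (∀ i, ∀ t ∈ Set.Icc (0 : ℝ) T, g i t = x + ∫ s in (0 : ℝ)..t, g' i s) ∧
      (∀ i, MemLp (g' i) 2 (volume.restrict (Set.Icc (0 : ℝ) T))) ∧
      r = (1 / 4) * ∑ i, ∫ t in (0 : ℝ)..T,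
          ‖g' i t + gradient V (g i t)
            + (1 / (N : ℝ)) • ∑ k, gradient F (g i t - g k t)‖ ^ 2 }, 0 ≤ z := by
    rintro N z ⟨g, g', -, -, -, rfl⟩
    apply mul_nonneg (by norm_num)
    apply Finset.sum_nonneg
    intro i _
    apply intervalIntegral.integral_nonneg hT.le
    intro t _
    positivity
  -- membership of the comparison value
  have hmem : ∀ N : ℕ, 1 ≤ N → rr N ∈ { r : ℝ | ∃ g g' : Fin N → ℝ → EuclideanSpace ℝ (Fin d),
      (∀ i : Fin N, (i : ℕ) = 0 → (∀ t ∈ Set.Icc (0 : ℝ) T, g i t = f t ∧ g' i t = f' t)) ∧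
      (∀ i, ∀ t ∈ Set.Icc (0 : ℝ) T, g i t = x + ∫ s in (0 : ℝ)..t, g' i s) ∧
      (∀ i, MemLp (g' i) 2 (volume.restrict (Set.Icc (0 : ℝ) T))) ∧
      r = (1 / 4) * ∑ i, ∫ t in (0 : ℝ)..T,
          ‖g' i t + gradient V (g i t)
            + (1 / (N : ℝ)) • ∑ k, gradient F (g i t - g k t)‖ ^ 2 } := by
    intro N hN
    have hNpos : 0 < N := hN
    refine ⟨fun i t => if (i:ℕ) = 0 then f t else Ψinf t,
      fun i t => if (i:ℕ) = 0 then f' t else Ψ' t, ?_, ?_, ?_, ?_⟩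
    · intro i hi t ht
      simp [hi]
    · intro i t ht
      by_cases hi : (i:ℕ) = 0
      · simpa [hi] using hf t ht
      · simpa [hi] using hΨrep t ht
    · intro i
      by_cases hi : (i:ℕ) = 0 <;> simp [hi, hfL2, hΨ'L2]
    · -- the value computation
      have hcard : ((univ : Finset (Fin N)).erase ⟨0, hNpos⟩).card = N - 1 := by
        rw [Finset.card_erase_of_mem (mem_univ _), Finset.card_univ, Fintype.card_fin]
      have hne : ∀ k : Fin N, k ≠ ⟨0, hNpos⟩ → ¬((k:ℕ) = 0) := by
        intro k hk h0; exact hk (Fin.ext h0)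
      have hsum : ∑ i : Fin N, (∫ t in (0:ℝ)..T,
          ‖(if (i:ℕ) = 0 then f' t else Ψ' t)
            + gradient V (if (i:ℕ) = 0 then f t else Ψinf t)
            + (1/(N:ℝ)) • ∑ k : Fin N, gradient F ((if (i:ℕ) = 0 then f t else Ψinf t)
                - (if (k:ℕ) = 0 then f t else Ψinf t))‖^2)
          = A N + ((N-1 : ℕ) : ℝ) * ((1/(N:ℝ))^2 * B) := by
        rw [← Finset.add_sum_erase _ _ (Finset.mem_univ (⟨0,hNpos⟩ : Fin N))]
        congr 1
        · -- i₀ term = A N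
          have hpt : ∀ t : ℝ, (1/(N:ℝ)) • ∑ k : Fin N,
              gradient F (f t - if (k:ℕ) = 0 then f t else Ψinf t)
              = (((N-1 : ℕ) : ℝ)/(N:ℝ)) • w t := by
            intro t
            rw [← Finset.add_sum_erase _ _ (Finset.mem_univ (⟨0,hNpos⟩ : Fin N))]
            rw [Finset.sum_congr rfl
              (fun k hk => by rw [if_neg (hne k (Finset.ne_of_mem_erase hk))])]
            simp only [Fin.val_mk, ↓reduceIte, sub_self, hgradF0, zero_add]
            rw [Finset.sum_const, hcard, ← Nat.cast_smul_eq_nsmul ℝ, smul_smul,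
              one_div_mul_eq_div]
          simp only [Fin.val_mk, ↓reduceIte]
          rw [hAdef]
          simp only [hpt]
        · -- erase terms
          rw [Finset.sum_congr rfl (fun i hi => ?_), Finset.sum_const, hcard, nsmul_eq_mul]
          have hine := hne i (Finset.ne_of_mem_erase hi)
          have hpt : ∀ t : ℝ, ‖(if (i:ℕ) = 0 then f' t else Ψ' t)
              + gradient V (if (i:ℕ) = 0 then f t else Ψinf t)
              + (1/(N:ℝ)) • ∑ k : Fin N, gradient F ((if (i:ℕ) = 0 then f t else Ψinf t)
                  - (if (k:ℕ) = 0 then f t else Ψinf t))‖^2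
              = (1/(N:ℝ))^2 * ‖gradient F (Ψinf t - f t)‖^2 := by
            intro t
            rw [if_neg hine, if_neg hine]
            have h0 : Ψ' t + gradient V (Ψinf t) = 0 := neg_add_cancel _
            have hs : ∑ k : Fin N, gradient F (Ψinf t - if (k:ℕ) = 0 then f t else Ψinf t)
                = gradient F (Ψinf t - f t) := by
              rw [Finset.sum_eq_single_of_mem (⟨0,hNpos⟩ : Fin N) (Finset.mem_univ _)
                (fun k _ hk => by rw [if_neg (hne k hk)]; simp [hgradF0])]
              simp
            rw [h0, zero_add, hs, norm_smul, mul_pow]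
            congr 1
            rw [Real.norm_eq_abs, abs_of_nonneg (by positivity)]
          simp only [hpt]
          rw [intervalIntegral.integral_const_mul, hBdef]
      simp only []
      rw [hrrdef]
      simp only [hsum]
  -- the key upper bound: JNproj ≤ rr N for N ≥ 1
  have hle : ∀ N : ℕ, 1 ≤ N → JNproj d T x V F f f' N ≤ rr N := by
    intro N hN
    exact csInf_le ⟨0, fun z hz => hnonneg N z hz⟩ (hmem N hN)
  -- nonnegativity of JNproj, eventually
  have hJnonneg : ∀ N : ℕ, 1 ≤ N → 0 ≤ JNproj d T x V F f f' N := by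
    intro N hN
    exact le_csInf ⟨rr N, hmem N hN⟩ (fun z hz => hnonneg N z hz)
  -- convergence of rr
  have htendr : Tendsto rr atTop (𝓝 ((1 / 4) * ∫ t in (0 : ℝ)..T,
      ‖f' t + gradient V (f t) + gradient F (f t - Ψinf t)‖ ^ 2)) := by
    have hmono : volume.restrict (Set.Ioc (0:ℝ) T) ≤ volume.restrict (Set.Icc (0:ℝ) T) :=
      Measure.restrict_mono Set.Ioc_subset_Icc_self le_rfl
    have hu2 : MemLp (fun t => f' t + gradient V (f t)) 2 (volume.restrict (Set.Icc (0:ℝ) T)) :=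
      hfL2.add (memLp_of_continuousOn hVfcont)
    have hw2 : MemLp w 2 (volume.restrict (Set.Icc (0:ℝ) T)) := memLp_of_continuousOn hwcont
    have huAESM : AEStronglyMeasurable (fun t => f' t + gradient V (f t))
        (volume.restrict (Set.Ioc (0:ℝ) T)) := hu2.aestronglyMeasurable.mono_measure hmono
    have hwAESM : AEStronglyMeasurable w (volume.restrict (Set.Ioc (0:ℝ) T)) :=
      hw2.aestronglyMeasurable.mono_measure hmono
    have ha : Tendsto (fun N : ℕ => ((N-1 : ℕ) : ℝ)/(N:ℝ)) atTop (𝓝 1) := by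
      have h1 : Tendsto (fun N : ℕ => 1 - 1/(N:ℝ)) atTop (𝓝 (1 - 0)) :=
        tendsto_const_nhds.sub tendsto_one_div_atTop_nhds_zero_nat
      rw [sub_zero] at h1
      apply h1.congr'
      filter_upwards [eventually_ge_atTop 1] with N hN
      have hN0 : (N:ℝ) ≠ 0 := by
        have : (0:ℝ) < N := by exact_mod_cast hN
        exact this.ne'
      rw [Nat.cast_sub hN, Nat.cast_one]
      field_simp
    have haN1 : ∀ N : ℕ, ((N-1 : ℕ) : ℝ)/(N:ℝ) ≤ 1 := fun N =>
      div_le_one_of_le₀ (by exact_mod_cast Nat.sub_le N 1) (Nat.cast_nonneg N)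
    have haN0 : ∀ N : ℕ, 0 ≤ ((N-1 : ℕ) : ℝ)/(N:ℝ) := fun N => by positivity
    have hdom : Tendsto (fun N : ℕ => ∫ t, ‖f' t + gradient V (f t)
          + (((N-1 : ℕ) : ℝ)/(N:ℝ)) • w t‖^2 ∂(volume.restrict (Set.Ioc (0:ℝ) T))) atTop
        (𝓝 (∫ t, ‖f' t + gradient V (f t) + w t‖^2 ∂(volume.restrict (Set.Ioc (0:ℝ) T)))) := by
      apply tendsto_integral_of_dominated_convergence
        (bound := fun t => (‖f' t + gradient V (f t)‖ + ‖w t‖)^2)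
      · intro n
        exact ((huAESM.add (hwAESM.const_smul (((n-1 : ℕ) : ℝ)/(n:ℝ)))).norm.pow 2)
      · exact ((hu2.norm.add hw2.norm).integrable_sq).mono_measure hmono
      · intro n
        apply ae_of_all
        intro t
        rw [Real.norm_eq_abs, abs_of_nonneg (by positivity)]
        apply pow_le_pow_left₀ (norm_nonneg _) _ 2
        refine (norm_add_le _ _).trans ?_
        gcongr
        rw [norm_smul, Real.norm_eq_abs, abs_of_nonneg (haN0 n)]
        calc (((n-1 : ℕ) : ℝ)/(n:ℝ)) * ‖w t‖ ≤ 1 * ‖w t‖ := by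
              gcongr; exact haN1 n
          _ = ‖w t‖ := one_mul _
      · apply ae_of_all
        intro t
        have h1 : Tendsto (fun N : ℕ => f' t + gradient V (f t)
            + (((N-1 : ℕ) : ℝ)/(N:ℝ)) • w t) atTop
            (𝓝 (f' t + gradient V (f t) + (1:ℝ) • w t)) :=
          tendsto_const_nhds.add (ha.smul_const (w t))
        rw [one_smul] at h1
        exact (h1.norm).pow 2
    have hArw : ∀ N : ℕ, A N = ∫ t, ‖f' t + gradient V (f t)
        + (((N-1 : ℕ) : ℝ)/(N:ℝ)) • w t‖^2 ∂(volume.restrict (Set.Ioc (0:ℝ) T)) := by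
      intro N
      rw [hAdef]
      exact intervalIntegral.integral_of_le hT.le
    have hAconv : Tendsto A atTop
        (𝓝 (∫ t, ‖f' t + gradient V (f t) + w t‖^2 ∂(volume.restrict (Set.Ioc (0:ℝ) T)))) := by
      apply hdom.congr
      intro N
      exact (hArw N).symm
    have hc : Tendsto (fun N : ℕ => ((N-1 : ℕ) : ℝ) * ((1/(N:ℝ))^2 * B)) atTop (𝓝 0) := by
      have h2 : Tendsto (fun N : ℕ => ((N-1 : ℕ) : ℝ)/(N:ℝ) * (1/(N:ℝ)) * B) atTop
          (𝓝 (1 * 0 * B)) :=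
        (ha.mul tendsto_one_div_atTop_nhds_zero_nat).mul tendsto_const_nhds
      rw [show (1:ℝ) * 0 * B = 0 by ring] at h2
      apply h2.congr
      intro N
      ring
    have hfinal := (hAconv.add hc).const_mul (1/4 : ℝ)
    rw [add_zero] at hfinal
    have hIeq : (∫ t, ‖f' t + gradient V (f t) + w t‖^2
        ∂(volume.restrict (Set.Ioc (0:ℝ) T)))
        = ∫ t in (0:ℝ)..T, ‖f' t + gradient V (f t) + gradient F (f t - Ψinf t)‖^2 :=
      (intervalIntegral.integral_of_le hT.le).symm
    rw [hIeq] at hfinal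
    exact hfinal
  -- put it together
  have hev : ∀ᶠ N in atTop, JNproj d T x V F f f' N ≤ rr N := by
    filter_upwards [eventually_ge_atTop 1] with N hN using hle N hN
  have hcob : IsCoboundedUnder (· ≤ ·) atTop (fun N : ℕ => JNproj d T x V F f f' N) := by
    apply Filter.IsBoundedUnder.isCoboundedUnder_le (α := ℝ)
    refine ⟨0, ?_⟩
    rw [eventually_map]
    filter_upwards [eventually_ge_atTop 1] with N hN using hJnonneg N hN
  calc limsup (fun N : ℕ => JNproj d T x V F f f' N) atTop
      ≤ limsup rr atTop := limsup_le_limsup hev hcob htendr.isBoundedUnder_le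
    _ = _ := htendr.limsup_eq
end

section
/- Under the setting of the previous statement (with the choice $f_k=\Psi_\infty^x$ for $k\ge 2$), for every $N\ge 1$ one has the explicit bound $$J_N(f)\le \frac14\int_0^T\Big\|\dot f+\nabla V(f)+\Big(1-\frac1N\Big)\nabla F(f-\Psi_\infty^x)\Big\|^2 dt + \frac1{4N}\int_0^T\|\nabla F(\Psi_\infty^x - f)\|^2 dt.$$ -/
open MeasureTheory Finset Filter

/-- The gradient at `0` of an even differentiable function vanishes. -/
lemma grad_even_zero {d : ℕ} {F : EuclideanSpace ℝ (Fin d) → ℝ}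
    (hF : Differentiable ℝ F) (hFeven : ∀ z, F (-z) = F z) :
    gradient F 0 = 0 := by
  have h1 : HasFDerivAt F (fderiv ℝ F 0) 0 := (hF 0).hasFDerivAt
  have hneg : HasFDerivAt (fun z : EuclideanSpace ℝ (Fin d) => -z)
      (-(ContinuousLinearMap.id ℝ (EuclideanSpace ℝ (Fin d)))) 0 := by
    exact (hasFDerivAt_id (0 : EuclideanSpace ℝ (Fin d))).neg
  have h1' : HasFDerivAt F (fderiv ℝ F 0) (-(0 : EuclideanSpace ℝ (Fin d))) := by
    simpa using h1
  have h2 : HasFDerivAt (fun z => F (-z))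
      ((fderiv ℝ F 0).comp (-(ContinuousLinearMap.id ℝ (EuclideanSpace ℝ (Fin d))))) 0 :=
    h1'.comp 0 hneg
  have heq : (fun z => F (-z)) = F := funext hFeven
  rw [heq] at h2
  have huniq := h2.unique h1
  have h3 : (fderiv ℝ F 0).comp (-(ContinuousLinearMap.id ℝ (EuclideanSpace ℝ (Fin d))))
      = -(fderiv ℝ F 0) := by ext v; simp
  rw [h3] at huniq
  have hD : fderiv ℝ F 0 = 0 := by
    have h4 : fderiv ℝ F 0 + fderiv ℝ F 0 = 0 := by
      nth_rewrite 1 [← huniq]; simp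
    have h5 := congrArg (fun L => (2⁻¹ : ℝ) • L) h4
    simpa [smul_add, ← two_smul ℝ, smul_smul] using h5
  have hg : HasGradientAt F 0 0 := by
    rw [hasGradientAt_iff_hasFDerivAt]
    simpa [hD] using h1
  exact hg.gradient

/-- Summing a function that is `a` at `0` and `b` elsewhere over `Fin N`. -/
lemma fin_sum_ite {E : Type*} [AddCommGroup E] [Module ℝ E] (N : ℕ) [NeZero N] (a b : E) :
    ∑ k : Fin N, (if (k : ℕ) = 0 then a else b) = a + ((N : ℝ) - 1) • b := by
  have h : ∀ k : Fin N, (if (k : ℕ) = 0 then a else b)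
      = b + (if k = (0 : Fin N) then a - b else 0) := by
    intro k
    by_cases hk : k = 0
    · simp [hk]
    · have : (k : ℕ) ≠ 0 := fun h => hk (Fin.ext (by simpa using h))
      simp [hk, this]
  simp_rw [h, Finset.sum_add_distrib, Finset.sum_const,
    Finset.sum_ite_eq' Finset.univ (0 : Fin N) (fun _ => a - b)]
  have hcard : (Finset.univ : Finset (Fin N)).card = N := by simp
  rw [hcard]
  have : (N : ℝ) • b = N • b := by
    exact_mod_cast Nat.cast_smul_eq_nsmul ℝ N b
  rw [sub_smul, one_smul, ← this]
  simp
  abel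

theorem JN_explicit_upper_bound
    (d : ℕ) (T : ℝ) (hT : 0 < T) (x : EuclideanSpace ℝ (Fin d))
    (V : EuclideanSpace ℝ (Fin d) → ℝ) (hV : ContDiff ℝ 2 V)
    (KV : NNReal) (hVlip : LipschitzWith KV (gradient V))
    (F : EuclideanSpace ℝ (Fin d) → ℝ) (hF : ContDiff ℝ 2 F)
    (hFeven : ∀ z, F (-z) = F z) (hF0 : F 0 = 0)
    (KF : NNReal) (hFlip : LipschitzWith KF (gradient F))
    (f f' : ℝ → EuclideanSpace ℝ (Fin d))
    (hf : ∀ t ∈ Set.Icc (0 : ℝ) T, f t = x + ∫ s in (0 : ℝ)..t, f' s)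
    (hfL2 : MemLp f' 2 (volume.restrict (Set.Icc (0 : ℝ) T)))
    (Ψinf : ℝ → EuclideanSpace ℝ (Fin d)) (hΨinf0 : Ψinf 0 = x)
    (hΨinf : ∀ t ∈ Set.Icc (0 : ℝ) T, HasDerivAt Ψinf (-(gradient V (Ψinf t))) t)
    (N : ℕ) (hN : 1 ≤ N) :
    JNproj d T x V F f f' N
      ≤ (1 / 4) * (∫ t in (0 : ℝ)..T,
            ‖f' t + gradient V (f t)
              + (1 - 1 / (N : ℝ)) • gradient F (f t - Ψinf t)‖ ^ 2)
        + (1 / (4 * (N : ℝ))) * ∫ t in (0 : ℝ)..T,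
            ‖gradient F (Ψinf t - f t)‖ ^ 2 := by
  haveI : NeZero N := ⟨by omega⟩
  have hNR : (0 : ℝ) < N := by exact_mod_cast hN
  -- the candidate companion paths
  set dΨ : ℝ → EuclideanSpace ℝ (Fin d) := fun t => -(gradient V (Ψinf t)) with hdΨ
  set g : Fin N → ℝ → EuclideanSpace ℝ (Fin d) :=
    fun i => if (i : ℕ) = 0 then f else Ψinf with hg
  set g' : Fin N → ℝ → EuclideanSpace ℝ (Fin d) :=
    fun i => if (i : ℕ) = 0 then f' else dΨ with hg'
  -- gradient of F at 0 vanishes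
  have hgF0 : gradient F 0 = 0 :=
    grad_even_zero (hF.differentiable two_ne_zero) hFeven
  -- continuity facts
  have hΨcont : ContinuousOn Ψinf (Set.Icc (0 : ℝ) T) := fun t ht =>
    ((hΨinf t ht).continuousAt).continuousWithinAt
  have hdΨcont : ContinuousOn dΨ (Set.Icc (0 : ℝ) T) :=
    (hVlip.continuous.comp_continuousOn hΨcont).neg
  -- the FTC representation of Ψinf
  have hFTC : ∀ t ∈ Set.Icc (0 : ℝ) T, Ψinf t = x + ∫ s in (0 : ℝ)..t, dΨ s := by
    intro t ht
    have hsub : Set.uIcc (0 : ℝ) t ⊆ Set.Icc (0 : ℝ) T := by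
      rw [Set.uIcc_of_le ht.1]
      exact Set.Icc_subset_Icc le_rfl ht.2
    have hint : IntervalIntegrable dΨ volume 0 t :=
      (hdΨcont.mono hsub).intervalIntegrable
    have := intervalIntegral.integral_eq_sub_of_hasDerivAt
      (fun s hs => hΨinf s (hsub hs)) hint
    rw [this, hΨinf0]
    abel
  -- square-integrability of dΨ
  have hdΨL2 : MemLp dΨ 2 (volume.restrict (Set.Icc (0 : ℝ) T)) := by
    obtain ⟨C, hC⟩ := isCompact_Icc.exists_bound_of_continuousOn hdΨcont
    refine MemLp.of_bound (hdΨcont.aestronglyMeasurable measurableSet_Icc) C ?_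
    exact (ae_restrict_iff' measurableSet_Icc).mpr (Filter.Eventually.of_forall hC)
  -- the values of the integrals for each index
  set EA : ℝ := ∫ t in (0 : ℝ)..T,
      ‖f' t + gradient V (f t) + (1 - 1 / (N : ℝ)) • gradient F (f t - Ψinf t)‖ ^ 2 with hEA
  set EB : ℝ := ∫ t in (0 : ℝ)..T, ‖gradient F (Ψinf t - f t)‖ ^ 2 with hEB
  have hEBnonneg : 0 ≤ EB :=
    intervalIntegral.integral_nonneg hT.le (fun t _ => by positivity)
  have hkey : ∀ i : Fin N,
      (∫ t in (0 : ℝ)..T, ‖g' i t + gradient V (g i t)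
          + (1 / (N : ℝ)) • ∑ k, gradient F (g i t - g k t)‖ ^ 2)
      = if (i : ℕ) = 0 then EA else (1 / (N : ℝ)) ^ 2 * EB := by
    intro i
    have hsum : ∀ y : EuclideanSpace ℝ (Fin d), ∀ t : ℝ,
        ∑ k, gradient F (y - g k t)
          = gradient F (y - f t) + ((N : ℝ) - 1) • gradient F (y - Ψinf t) := by
      intro y t
      have : ∀ k : Fin N, gradient F (y - g k t)
          = if (k : ℕ) = 0 then gradient F (y - f t) else gradient F (y - Ψinf t) := by
        intro k; by_cases hk : (k : ℕ) = 0 <;> rw [Fin.val_eq_zero_iff] at hk <;> simp [hg, hk]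
      simp_rw [this]
      exact fin_sum_ite N _ _
    by_cases hi : (i : ℕ) = 0
    · rw [if_pos hi]
      have hgi : g i = f := by rw [Fin.val_eq_zero_iff] at hi; simp [hg, hi]
      have hgi' : g' i = f' := by rw [Fin.val_eq_zero_iff] at hi; simp [hg', hi]
      have hpt : ∀ t : ℝ, ‖g' i t + gradient V (g i t)
          + (1 / (N : ℝ)) • ∑ k, gradient F (g i t - g k t)‖ ^ 2
          = ‖f' t + gradient V (f t)
              + (1 - 1 / (N : ℝ)) • gradient F (f t - Ψinf t)‖ ^ 2 := by
        intro t
        rw [hgi, hgi', hsum (f t) t, sub_self, hgF0]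
        have hs : (1 / (N : ℝ)) • ((0 : EuclideanSpace ℝ (Fin d))
              + ((N : ℝ) - 1) • gradient F (f t - Ψinf t))
            = (1 - 1 / (N : ℝ)) • gradient F (f t - Ψinf t) := by
          rw [zero_add, smul_smul]
          congr 1
          field_simp
        rw [hs]
      rw [hEA, intervalIntegral.integral_congr (fun t _ => hpt t)]
    · rw [if_neg hi]
      have hgi : g i = Ψinf := by rw [Fin.val_eq_zero_iff] at hi; simp [hg, hi]
      have hgi' : g' i = dΨ := by rw [Fin.val_eq_zero_iff] at hi; simp [hg', hi]
      have hpt : ∀ t : ℝ, ‖g' i t + gradient V (g i t)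
          + (1 / (N : ℝ)) • ∑ k, gradient F (g i t - g k t)‖ ^ 2
          = (1 / (N : ℝ)) ^ 2 * ‖gradient F (Ψinf t - f t)‖ ^ 2 := by
        intro t
        rw [hgi, hgi', hsum (Ψinf t) t, sub_self, hgF0, smul_zero, add_zero, hdΨ]
        simp only [neg_add_cancel, zero_add]
        rw [norm_smul]
        rw [mul_pow]
        congr 1
        rw [Real.norm_eq_abs, abs_of_nonneg (by positivity : (0:ℝ) ≤ 1 / (N:ℝ))]
      rw [intervalIntegral.integral_congr (fun t _ => hpt t),
        intervalIntegral.integral_const_mul]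
  -- membership in the defining set
  have hmem : (1 / 4) * (EA + ((N : ℝ) - 1) • ((1 / (N : ℝ)) ^ 2 * EB))
      ∈ { r : ℝ | ∃ g g' : Fin N → ℝ → EuclideanSpace ℝ (Fin d),
        (∀ i : Fin N, (i : ℕ) = 0 → (∀ t ∈ Set.Icc (0 : ℝ) T, g i t = f t ∧ g' i t = f' t)) ∧
        (∀ i, ∀ t ∈ Set.Icc (0 : ℝ) T, g i t = x + ∫ s in (0 : ℝ)..t, g' i s) ∧
        (∀ i, MemLp (g' i) 2 (volume.restrict (Set.Icc (0 : ℝ) T))) ∧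
        r = (1 / 4) * ∑ i, ∫ t in (0 : ℝ)..T,
            ‖g' i t + gradient V (g i t)
              + (1 / (N : ℝ)) • ∑ k, gradient F (g i t - g k t)‖ ^ 2 } := by
    refine ⟨g, g', ?_, ?_, ?_, ?_⟩
    · intro i hi t _
      rw [Fin.val_eq_zero_iff] at hi; constructor <;> simp [hg, hg', hi]
    · intro i t ht
      by_cases hi : (i : ℕ) = 0
      · rw [Fin.val_eq_zero_iff] at hi; simpa [hg, hg', hi] using hf t ht
      · rw [Fin.val_eq_zero_iff] at hi; simpa [hg, hg', hi] using hFTC t ht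
    · intro i
      by_cases hi : (i : ℕ) = 0
      · rw [Fin.val_eq_zero_iff] at hi; simpa [hg', hi] using hfL2
      · rw [Fin.val_eq_zero_iff] at hi; simpa [hg', hi] using hdΨL2
    · simp_rw [hkey]
      rw [fin_sum_ite N EA ((1 / (N : ℝ)) ^ 2 * EB)]
  -- lower boundedness of the set
  have hbdd : BddBelow { r : ℝ | ∃ g g' : Fin N → ℝ → EuclideanSpace ℝ (Fin d),
        (∀ i : Fin N, (i : ℕ) = 0 → (∀ t ∈ Set.Icc (0 : ℝ) T, g i t = f t ∧ g' i t = f' t)) ∧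
        (∀ i, ∀ t ∈ Set.Icc (0 : ℝ) T, g i t = x + ∫ s in (0 : ℝ)..t, g' i s) ∧
        (∀ i, MemLp (g' i) 2 (volume.restrict (Set.Icc (0 : ℝ) T))) ∧
        r = (1 / 4) * ∑ i, ∫ t in (0 : ℝ)..T,
            ‖g' i t + gradient V (g i t)
              + (1 / (N : ℝ)) • ∑ k, gradient F (g i t - g k t)‖ ^ 2 } := by
    refine ⟨0, ?_⟩
    rintro r ⟨G, G', -, -, -, rfl⟩
    have : ∀ i : Fin N, 0 ≤ ∫ t in (0 : ℝ)..T,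
        ‖G' i t + gradient V (G i t)
          + (1 / (N : ℝ)) • ∑ k, gradient F (G i t - G k t)‖ ^ 2 := fun i =>
      intervalIntegral.integral_nonneg hT.le (fun t _ => by positivity)
    have hsumpos : 0 ≤ ∑ i : Fin N, ∫ t in (0 : ℝ)..T,
        ‖G' i t + gradient V (G i t)
          + (1 / (N : ℝ)) • ∑ k, gradient F (G i t - G k t)‖ ^ 2 :=
      Finset.sum_nonneg (fun i _ => this i)
    linarith
  have hle : JNproj d T x V F f f' N
      ≤ (1 / 4) * (EA + ((N : ℝ) - 1) • ((1 / (N : ℝ)) ^ 2 * EB)) :=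
    csInf_le hbdd hmem
  refine hle.trans ?_
  rw [smul_eq_mul]
  have h1 : ((N : ℝ) - 1) * ((1 / (N : ℝ)) ^ 2 * EB) ≤ (1 / (N : ℝ)) * EB := by
    have h2 : ((N : ℝ) - 1) * (1 / (N : ℝ)) ^ 2 ≤ 1 / (N : ℝ) := by
      rw [div_pow, one_pow, mul_one_div, div_le_div_iff₀ (by positivity) hNR]
      nlinarith
    calc ((N : ℝ) - 1) * ((1 / (N : ℝ)) ^ 2 * EB)
        = (((N : ℝ) - 1) * (1 / (N : ℝ)) ^ 2) * EB := by ring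
      _ ≤ (1 / (N : ℝ)) * EB := mul_le_mul_of_nonneg_right h2 hEBnonneg
  have : (1 : ℝ) / (4 * (N : ℝ)) * EB = (1 / 4) * ((1 / (N : ℝ)) * EB) := by ring
  rw [this]
  nlinarith [h1]
end
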